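/- Fix d ≥ 1, n ≥ 1, ω ∈ 𝕋, E ∈ ℝ, complex numbers v₁,…,v_d with v_{−k} := conj(v_k), and a function g : 𝕋 → ℝ satisfying g(−θ) = g(θ). Let V(θ), B be the block matrices of the long-range operator (V_{jk}(θ) = g(θ+(d−j)d^{-1}ω) if j = k, v_{k−j} if k > j, conj(v_{j−k}) if j > k; B upper triangular with B_{jk} = conj(v_{d−(k−j)}) for k ≥ j, else 0), and let f_{E,n} be the periodic-boundary determinant built from V, B with frequency ω. Then for every θ ∈ 𝕋: f_{E,n}(θ − (nd−1)/(2d)·ω) = conj( f_{E,n}(−θ − (nd−1)/(2d)·ω) ). -/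

import Mathlib

noncomputable section

open Matrix

/-- Block potential `V(θ)` of the long-range operator. -/
def Vlr (d : ℕ) (v : ℕ → ℂ) (g : ℝ → ℝ) (ω θ : ℝ) : Matrix (Fin d) (Fin d) ℂ := fun j k =>
  if j = k then (g (θ + ((d - 1 - (j : ℕ) : ℕ) : ℝ) * (ω / d)) : ℂ)
  else if (j : ℕ) < (k : ℕ) then v ((k : ℕ) - (j : ℕ))
  else starRingEnd ℂ (v ((j : ℕ) - (k : ℕ)))

/-- Hopping matrix `B` of the long-range operator. -/
def Blr (d : ℕ) (v : ℕ → ℂ) : Matrix (Fin d) (Fin d) ℂ := fun j k =>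
  if (j : ℕ) ≤ (k : ℕ) then starRingEnd ℂ (v (d - ((k : ℕ) - (j : ℕ)))) else 0

/-- Finite-volume block matrix `P_n(θ)` with periodic boundary conditions (constant hopping
block `B`): diagonal blocks `V(θ+(n−j)ω)` (1-based `j`), subdiagonal blocks `B`,
superdiagonal blocks `B*`, corner blocks `B` (top right) and `B*` (bottom left). -/
def Pmat {d : ℕ} (B : Matrix (Fin d) (Fin d) ℂ) (V : ℝ → Matrix (Fin d) (Fin d) ℂ)
    (ω : ℝ) (n : ℕ) (θ : ℝ) : Matrix (Fin n × Fin d) (Fin n × Fin d) ℂ := fun p q =>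
  (if p.1 = q.1 then V (θ + ((n - 1 - (p.1 : ℕ) : ℕ) : ℝ) * ω) p.2 q.2 else 0)
  + (if (p.1 : ℕ) = (q.1 : ℕ) + 1 then B p.2 q.2 else 0)
  + (if (q.1 : ℕ) = (p.1 : ℕ) + 1 then Bᴴ p.2 q.2 else 0)
  + (if (p.1 : ℕ) = 0 ∧ (q.1 : ℕ) = n - 1 then B p.2 q.2 else 0)
  + (if (q.1 : ℕ) = 0 ∧ (p.1 : ℕ) = n - 1 then Bᴴ p.2 q.2 else 0)

/-- `f_{E,n}(θ) = det(P_n(θ) − E·I_{nd})`. -/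
def fdet {d : ℕ} (B : Matrix (Fin d) (Fin d) ℂ) (V : ℝ → Matrix (Fin d) (Fin d) ℂ)
    (ω : ℝ) (E : ℝ) (n : ℕ) (θ : ℝ) : ℂ :=
  (Pmat B V ω n θ - (E : ℂ) • (1 : Matrix (Fin n × Fin d) (Fin n × Fin d) ℂ)).det

/-- For the long-range blocks with even `g`:
`f_{E,n}(θ − (nd−1)/(2d)·ω) = conj(f_{E,n}(−θ − (nd−1)/(2d)·ω))`. -/
-- AUX

lemma ite_star (c : Prop) [Decidable c] (z : ℂ) :
    star (ite c z 0) = ite c (star z) 0 := by split <;> simp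

lemma ite_eq_ite' {c₁ c₂ : Prop} [Decidable c₁] [Decidable c₂] (h : c₁ ↔ c₂) (z w : ℂ)
    (hz : c₂ → z = w) : ite c₁ z 0 = ite c₂ w 0 := by
  by_cases hc : c₂
  · rw [if_pos hc, if_pos (h.mpr hc), hz hc]
  · rw [if_neg hc, if_neg (fun hcc => hc (h.mp hcc))]

lemma Blr_rev {d : ℕ} (v : ℕ → ℂ) (m m' : Fin d) :
    Blr d v m.rev m'.rev = Blr d v m' m := by
  have h1 := m.isLt; have h2 := m'.isLt
  simp only [Blr, Fin.val_rev]
  rcases le_or_gt (m' : ℕ) (m : ℕ) with h | h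
  · rw [if_pos (by omega), if_pos h]
    congr 2
    omega
  · rw [if_neg (by omega), if_neg (by omega)]

lemma Vlr_conj {d : ℕ} (v : ℕ → ℂ) (g : ℝ → ℝ) (ω a : ℝ) (m m' : Fin d) :
    star (Vlr d v g ω a m' m) = Vlr d v g ω a m m' := by
  by_cases h : m = m'
  · subst h; simp [Vlr]
  · have h' : m' ≠ m := Ne.symm h
    have hv : (m : ℕ) ≠ (m' : ℕ) := fun hc => h (Fin.ext hc)
    rcases lt_or_gt_of_ne hv with hlt | hlt
    · -- (m:ℕ) < (m':ℕ): Vlr m' m = conj v(m'-m); Vlr m m' = v(m'-m)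
      unfold Vlr
      rw [if_neg h', if_neg (not_lt.mpr hlt.le), if_neg h, if_pos hlt,
        starRingEnd_apply, star_star]
    · unfold Vlr
      rw [if_neg h', if_pos hlt, if_neg h, if_neg (not_lt.mpr hlt.le),
        starRingEnd_apply]

lemma Vlr_rev {d : ℕ} (v : ℕ → ℂ) (g : ℝ → ℝ) (hg : ∀ x : ℝ, g (-x) = g x)
    (ω a b : ℝ) (hab : a + b = -((d : ℝ) - 1) * (ω / d)) (m m' : Fin d) :
    Vlr d v g ω a m.rev m'.rev = Vlr d v g ω b m' m := by
  have h1 := m.isLt; have h2 := m'.isLt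
  by_cases h : m = m'
  · subst h
    unfold Vlr
    rw [if_pos rfl, if_pos rfl]
    have e1 : ((d - 1 - (m.rev : ℕ) : ℕ) : ℝ) = (m : ℕ) := by
      rw [Fin.val_rev]; congr 1; omega
    have e2 : ((d - 1 - (m : ℕ) : ℕ) : ℝ) = (d : ℝ) - 1 - (m : ℕ) := by
      have e : (d - 1 - (m : ℕ)) + ((m : ℕ) + 1) = d := by omega
      have := congrArg (Nat.cast : ℕ → ℝ) e
      push_cast at this
      linarith
    rw [e1, e2]
    have harg : a + ((m : ℕ) : ℝ) * (ω / d) = -(b + ((d : ℝ) - 1 - ((m : ℕ) : ℝ)) * (ω / d)) := by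
      linear_combination hab
    rw [harg, hg]
  · have h' : m' ≠ m := Ne.symm h
    have hrev : m.rev ≠ m'.rev := fun hc => h (Fin.rev_injective hc)
    have hv : (m : ℕ) ≠ (m' : ℕ) := fun hc => h (Fin.ext hc)
    rcases lt_or_gt_of_ne hv with hlt | hlt
    · -- m < m', so rev m > rev m', and m' > m
      simp only [Vlr, if_neg hrev, if_neg h', Fin.val_rev,
        if_neg (by omega : ¬ (d - ((m : ℕ) + 1) < d - ((m' : ℕ) + 1))),
        if_neg (not_lt.mpr hlt.le)]
      congr 2
      omega
    · simp only [Vlr, if_neg hrev, if_neg h', Fin.val_rev,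
        if_pos (by omega : (d - ((m : ℕ) + 1) < d - ((m' : ℕ) + 1))),
        if_pos hlt]
      congr 1
      omega

lemma Pmat_herm {d n : ℕ} (v : ℕ → ℂ) (g : ℝ → ℝ) (ω x : ℝ) :
    (Pmat (Blr d v) (Vlr d v g ω) ω n x)ᴴ = Pmat (Blr d v) (Vlr d v g ω) ω n x := by
  ext p q
  obtain ⟨j, m⟩ := p; obtain ⟨j', m'⟩ := q
  simp only [conjTranspose_apply, Pmat, star_add, ite_star, star_star]
  have T1 : (if j' = j then star (Vlr d v g ω (x + ((n - 1 - (j' : ℕ) : ℕ) : ℝ) * ω) m' m) else 0)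
      = (if j = j' then Vlr d v g ω (x + ((n - 1 - (j : ℕ) : ℕ) : ℝ) * ω) m m' else 0) := by
    refine ite_eq_ite' eq_comm _ _ (fun hjj => ?_)
    rw [hjj, Vlr_conj]
  rw [T1]
  ring

lemma Pmat_rev {d n : ℕ} (v : ℕ → ℂ) (g : ℝ → ℝ) (hg : ∀ x : ℝ, g (-x) = g x)
    (ω x y : ℝ) (hxy : x + y + ((n : ℝ) - 1) * ω = -((d : ℝ) - 1) * (ω / d))
    (j : Fin n) (m : Fin d) (j' : Fin n) (m' : Fin d) :
    Pmat (Blr d v) (Vlr d v g ω) ω n x (j.rev, m.rev) (j'.rev, m'.rev)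
      = Pmat (Blr d v) (Vlr d v g ω) ω n y (j', m') (j, m) := by
  have hj := j.isLt; have hj' := j'.isLt
  simp only [Pmat]
  have S1 : (if j.rev = j'.rev then
        Vlr d v g ω (x + ((n - 1 - (j.rev : ℕ) : ℕ) : ℝ) * ω) m.rev m'.rev else 0)
      = (if j' = j then Vlr d v g ω (y + ((n - 1 - (j' : ℕ) : ℕ) : ℝ) * ω) m' m else 0) := by
    refine ite_eq_ite' ⟨fun hc => (Fin.rev_injective hc).symm, fun hc => by rw [hc]⟩ _ _
      (fun hjj => ?_)
    rw [hjj]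
    have e1 : ((n - 1 - (j.rev : ℕ) : ℕ) : ℝ) = (j : ℕ) := by
      rw [Fin.val_rev]; congr 1; omega
    have e2 : ((n - 1 - (j : ℕ) : ℕ) : ℝ) = (n : ℝ) - 1 - (j : ℕ) := by
      have e : (n - 1 - (j : ℕ)) + ((j : ℕ) + 1) = n := by omega
      have := congrArg (Nat.cast : ℕ → ℝ) e
      push_cast at this
      linarith
    rw [e1, e2]
    refine Vlr_rev v g hg ω _ _ ?_ m m'
    linear_combination hxy
  have S2 : (if (j.rev : ℕ) = (j'.rev : ℕ) + 1 then Blr d v m.rev m'.rev else 0)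
      = (if (j' : ℕ) = (j : ℕ) + 1 then Blr d v m' m else 0) := by
    refine ite_eq_ite' ?_ _ _ (fun _ => Blr_rev v m m')
    rw [Fin.val_rev, Fin.val_rev]; omega
  have S3 : (if (j'.rev : ℕ) = (j.rev : ℕ) + 1 then (Blr d v)ᴴ m.rev m'.rev else 0)
      = (if (j : ℕ) = (j' : ℕ) + 1 then (Blr d v)ᴴ m' m else 0) := by
    refine ite_eq_ite' ?_ _ _ (fun _ => ?_)
    · rw [Fin.val_rev, Fin.val_rev]; omega
    · simp only [conjTranspose_apply]
      rw [Blr_rev v m' m]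
  have S4 : (if (j.rev : ℕ) = 0 ∧ (j'.rev : ℕ) = n - 1 then Blr d v m.rev m'.rev else 0)
      = (if (j' : ℕ) = 0 ∧ (j : ℕ) = n - 1 then Blr d v m' m else 0) := by
    refine ite_eq_ite' ?_ _ _ (fun _ => Blr_rev v m m')
    rw [Fin.val_rev, Fin.val_rev]
    constructor <;> (intro hc; omega)
  have S5 : (if (j'.rev : ℕ) = 0 ∧ (j.rev : ℕ) = n - 1 then (Blr d v)ᴴ m.rev m'.rev else 0)
      = (if (j : ℕ) = 0 ∧ (j' : ℕ) = n - 1 then (Blr d v)ᴴ m' m else 0) := by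
    refine ite_eq_ite' ?_ _ _ (fun _ => ?_)
    · rw [Fin.val_rev, Fin.val_rev]
      constructor <;> (intro hc; omega)
    · simp only [conjTranspose_apply]
      rw [Blr_rev v m' m]
  rw [S1, S2, S3, S4, S5]

lemma fdet_real {d n : ℕ} (v : ℕ → ℂ) (g : ℝ → ℝ) (ω E x : ℝ) :
    starRingEnd ℂ (fdet (Blr d v) (Vlr d v g ω) ω E n x)
      = fdet (Blr d v) (Vlr d v g ω) ω E n x := by
  unfold fdet
  rw [starRingEnd_apply, ← Matrix.det_conjTranspose]
  congr 1
  rw [conjTranspose_sub, Pmat_herm]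
  congr 1
  rw [conjTranspose_smul, conjTranspose_one, Complex.star_def, Complex.conj_ofReal]

lemma fdet_flip {d n : ℕ} (v : ℕ → ℂ) (g : ℝ → ℝ) (hg : ∀ x : ℝ, g (-x) = g x)
    (ω E x y : ℝ) (hxy : x + y + ((n : ℝ) - 1) * ω = -((d : ℝ) - 1) * (ω / d)) :
    fdet (Blr d v) (Vlr d v g ω) ω E n x = fdet (Blr d v) (Vlr d v g ω) ω E n y := by
  unfold fdet
  rw [← Matrix.det_submatrix_equiv_self
    (Equiv.prodCongr (Fin.revPerm : Equiv.Perm (Fin n)) (Fin.revPerm : Equiv.Perm (Fin d)))]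
  rw [← Matrix.det_transpose
    (Pmat (Blr d v) (Vlr d v g ω) ω n y - (E : ℂ) • 1)]
  congr 1
  ext p q
  obtain ⟨pj, pm⟩ := p; obtain ⟨qj, qm⟩ := q
  simp only [Matrix.submatrix_apply, Matrix.sub_apply, Matrix.transpose_apply,
    Matrix.smul_apply, Equiv.prodCongr_apply, Prod.map_apply, Fin.revPerm_apply]
  have hiff : (((pj.rev, pm.rev) : Fin n × Fin d) = (qj.rev, qm.rev)) ↔
      (((qj, qm) : Fin n × Fin d) = (pj, pm)) := by
    rw [Prod.ext_iff, Prod.ext_iff]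
    constructor
    · rintro ⟨hA, hB⟩
      exact ⟨(Fin.rev_injective hA).symm, (Fin.rev_injective hB).symm⟩
    · rintro ⟨hA, hB⟩
      simp only at hA hB
      rw [hA, hB]
      exact ⟨rfl, rfl⟩
  have h1 : (1 : Matrix (Fin n × Fin d) (Fin n × Fin d) ℂ) (pj.rev, pm.rev) (qj.rev, qm.rev)
      = (1 : Matrix (Fin n × Fin d) (Fin n × Fin d) ℂ) (qj, qm) (pj, pm) := by
    rw [Matrix.one_apply, Matrix.one_apply, if_congr hiff rfl rfl]
  rw [Pmat_rev v g hg ω x y hxy pj pm qj qm, h1]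

theorem fdet_longrange_symm (d n : ℕ) (hd : 1 ≤ d) (hn : 1 ≤ n) (ω : ℝ) (E : ℝ)
    (v : ℕ → ℂ) (g : ℝ → ℝ) (hg : ∀ x : ℝ, g (-x) = g x) (θ : ℝ) :
    fdet (Blr d v) (Vlr d v g ω) ω E n (θ - ((n * d : ℝ) - 1) / (2 * d) * ω)
      = starRingEnd ℂ (fdet (Blr d v) (Vlr d v g ω) ω E n (-θ - ((n * d : ℝ) - 1) / (2 * d) * ω)) := by
  rw [fdet_real]
  apply fdet_flip v g hg
  have hd0 : (d : ℝ) ≠ 0 := by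
    have : (0 : ℝ) < d := by exact_mod_cast Nat.lt_of_lt_of_le Nat.zero_lt_one hd
    exact ne_of_gt this
  field_simp
  ring
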